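/- Let G be a finite set of C¹ diffeomorphisms of ℝ, closed under taking inverses, with every g ∈ G having everywhere positive derivative. Let a > 0, let 0 < ε₁ < a/100, and let δ₀ > 0 be a logarithmic modulus of continuity for G with respect to ε₁. Suppose x ∈ ℝ satisfies λ_*(x) > a. Then for every integer n ≥ 1 there exists a word h in G such that, setting y = h(x), J = [y − δ₀/2, y + δ₀/2] and I = h⁻¹(J), the following hold: x ∈ I; h'(z) > e^{n a/2} for every z ∈ I; and the length of the interval I is less than δ₀ · e^{−n a/2}. -/

import Mathlib

open MeasureTheory Filter Topology

/-- Composition of a list of maps: the list `[g_k, …, g₁]` composes to `g_k ∘ ⋯ ∘ g₁`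
(the empty list gives the identity map). -/
def wordComp (w : List (ℝ → ℝ)) : ℝ → ℝ := w.foldr (· ∘ ·) id

/-- A word in `G` is a finite list of elements of `G`. -/
def IsWord (G : Finset (ℝ → ℝ)) (w : List (ℝ → ℝ)) : Prop := ∀ g ∈ w, g ∈ G

/-- The maximal `n`-expansion `μ_n(x)`. -/
noncomputable def maxExp (G : Finset (ℝ → ℝ)) (n : ℕ) (x : ℝ) : ℝ :=
  sSup {d : ℝ | ∃ w : List (ℝ → ℝ), IsWord G w ∧ w.length ≤ n ∧ d = deriv (wordComp w) x}

/-- The transverse expansion exponent `λ_*(x) = limsup_n log(μ_n(x))/n`, in `[0,∞]`. -/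
noncomputable def expExponent (G : Finset (ℝ → ℝ)) (x : ℝ) : ENNReal :=
  Filter.limsup (fun n : ℕ => ENNReal.ofReal (Real.log (maxExp G n x) / n)) Filter.atTop

/-- `δ₀` is a logarithmic modulus of continuity for `G` with respect to `ε₁`:
points at distance at most `δ₀` have logarithmic derivatives within `ε₁` for each `g ∈ G`. -/
def LogModulus (G : Finset (ℝ → ℝ)) (ε₁ δ₀ : ℝ) : Prop :=
  ∀ g ∈ G, ∀ y z : ℝ, |y - z| ≤ δ₀ → |Real.log (deriv g y) - Real.log (deriv g z)| ≤ ε₁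

lemma wordComp_cons (g : ℝ → ℝ) (t : List (ℝ → ℝ)) : wordComp (g :: t) = g ∘ wordComp t := rfl

lemma wordComp_diff (w : List (ℝ → ℝ)) (hw : ∀ g ∈ w, Differentiable ℝ g) :
    Differentiable ℝ (wordComp w) := by
  induction w with
  | nil => exact differentiable_id
  | cons g t ih =>
    rw [wordComp_cons]
    exact (hw g (by simp)).comp (ih fun g hg => hw g (by simp [hg]))

lemma deriv_wordComp_cons (g : ℝ → ℝ) (t : List (ℝ → ℝ)) (hg : Differentiable ℝ g)
    (ht : Differentiable ℝ (wordComp t)) (y : ℝ) :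
    deriv (wordComp (g :: t)) y = deriv g (wordComp t y) * deriv (wordComp t) y := by
  rw [wordComp_cons]
  exact deriv_comp (x := y) (hg _) (ht _)

lemma wordComp_deriv_pos (w : List (ℝ → ℝ)) (hd : ∀ g ∈ w, Differentiable ℝ g)
    (hp : ∀ g ∈ w, ∀ y : ℝ, 0 < deriv g y) : ∀ y : ℝ, 0 < deriv (wordComp w) y := by
  induction w with
  | nil => intro y; simp [wordComp]
  | cons g t ih =>
    intro y
    rw [deriv_wordComp_cons g t (hd g (by simp)) (wordComp_diff t fun g hg => hd g (by simp [hg]))]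
    exact mul_pos (hp g (by simp) _) (ih (fun g hg => hd g (by simp [hg]))
      (fun g hg => hp g (by simp [hg])) y)

lemma one_step (g : ℝ → ℝ) (hg : Differentiable ℝ g) (hgpos : ∀ y : ℝ, 0 < deriv g y)
    (ε₁ δ₀ : ℝ)
    (hmodg : ∀ y z : ℝ, |y - z| ≤ δ₀ → |Real.log (deriv g y) - Real.log (deriv g z)| ≤ ε₁)
    (y₀ : ℝ) (r' : ℝ) (hr' : 0 ≤ r') (hr'δ : r' ≤ δ₀)
    (y : ℝ) (hy : |g y - g y₀| ≤ r' * Real.exp (Real.log (deriv g y₀) - ε₁)) :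
    |y - y₀| ≤ r' := by
  set c := Real.exp (Real.log (deriv g y₀) - ε₁) with hc
  have hc0 : 0 < c := Real.exp_pos _
  have hmono : StrictMono g := strictMono_of_deriv_pos hgpos
  have key : ∀ u ∈ Set.Icc (y₀ - r') (y₀ + r'), ∀ v ∈ Set.Icc (y₀ - r') (y₀ + r'),
      u ≤ v → c * (v - u) ≤ g v - g u := by
    apply (convex_Icc _ _).mul_sub_le_image_sub_of_le_deriv hg.continuous.continuousOn
      hg.differentiableOn
    intro u hu
    have hu' : u ∈ Set.Icc (y₀ - r') (y₀ + r') := interior_subset hu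
    have hdist : |u - y₀| ≤ δ₀ := by
      rw [abs_le]
      constructor <;> [linarith [hu'.1]; linarith [hu'.2]]
    have := hmodg u y₀ hdist
    have h1 : Real.log (deriv g y₀) - ε₁ ≤ Real.log (deriv g u) := by
      rw [abs_le] at this; linarith [this.1]
    calc c ≤ Real.exp (Real.log (deriv g u)) := Real.exp_le_exp.2 h1
      _ = deriv g u := Real.exp_log (hgpos u)
  have hyl : y₀ ∈ Set.Icc (y₀ - r') (y₀ + r') := by
    constructor <;> linarith
  rw [abs_le] at hy ⊢
  constructor
  · by_contra h
    push_neg at h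
    have h2 : y < y₀ - r' := by linarith
    have h3 : g y < g (y₀ - r') := hmono h2
    have h4 : c * (y₀ - (y₀ - r')) ≤ g y₀ - g (y₀ - r') :=
      key _ (by constructor <;> linarith) _ hyl (by linarith)
    have : y₀ - (y₀ - r') = r' := by ring
    rw [this] at h4
    nlinarith [hy.1]
  · by_contra h
    push_neg at h
    have h3 : g (y₀ + r') < g y := hmono (by linarith)
    have h4 : c * (y₀ + r' - y₀) ≤ g (y₀ + r') - g y₀ :=
      key _ hyl _ (by constructor <;> linarith) (by linarith)
    have : y₀ + r' - y₀ = r' := by ring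
    rw [this] at h4
    nlinarith [hy.2]

lemma key_contraction
    (G : Finset (ℝ → ℝ)) (hC1 : ∀ g ∈ G, ContDiff ℝ 1 g)
    (hpos : ∀ g ∈ G, ∀ y : ℝ, 0 < deriv g y)
    (ε₁ δ₀ : ℝ) (hδ₀ : 0 < δ₀) (hmod : LogModulus G ε₁ δ₀) (x : ℝ) :
    ∀ w : List (ℝ → ℝ), IsWord G w → ∀ r : ℝ, 0 ≤ r →
    (∀ i : ℕ, i ≤ w.length → r * Real.exp (-(Real.log (deriv (wordComp w) x)
        - Real.log (deriv (wordComp (w.drop i)) x) - i * ε₁)) ≤ δ₀) →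
    ∀ z : ℝ, |wordComp w z - wordComp w x| ≤ r →
      |z - x| ≤ r * Real.exp (-(Real.log (deriv (wordComp w) x) - w.length * ε₁))
      ∧ Real.exp (Real.log (deriv (wordComp w) x) - w.length * ε₁) ≤ deriv (wordComp w) z := by
  intro w
  induction w with
  | nil =>
    intro _ r hr _ z hz
    simp only [wordComp, List.foldr_nil, List.length_nil, Nat.cast_zero, zero_mul,
      deriv_id, deriv_id'', id_eq, Real.log_one, sub_zero, neg_zero, Real.exp_zero,
      mul_one] at hz ⊢
    exact ⟨hz, le_refl 1⟩
  | cons g t ih =>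
    intro hw r hr hcond z hz
    have hgG : g ∈ G := hw g (by simp)
    have htw : IsWord G t := fun g' hg' => hw g' (by simp [hg'])
    have hgd : Differentiable ℝ g := (hC1 g hgG).differentiable one_ne_zero
    have htdall : ∀ g' ∈ t, Differentiable ℝ g' :=
      fun g' hg' => (hC1 g' (htw g' hg')).differentiable one_ne_zero
    have htd : Differentiable ℝ (wordComp t) := wordComp_diff t htdall
    have htpos : ∀ y : ℝ, 0 < deriv (wordComp t) y :=
      wordComp_deriv_pos t htdall (fun g' hg' => hpos g' (htw g' hg'))
    have hgpos : ∀ y : ℝ, 0 < deriv g y := hpos g hgG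
    set y₀ := wordComp t x with hy₀
    have hderiv_eq : ∀ u : ℝ, deriv (wordComp (g :: t)) u
        = deriv g (wordComp t u) * deriv (wordComp t) u :=
      fun u => deriv_wordComp_cons g t hgd htd u
    have hSw : Real.log (deriv (wordComp (g :: t)) x)
        = Real.log (deriv g y₀) + Real.log (deriv (wordComp t) x) := by
      rw [hderiv_eq x, Real.log_mul (ne_of_gt (hgpos y₀)) (ne_of_gt (htpos x))]
    set r' := r * Real.exp (-(Real.log (deriv g y₀) - ε₁)) with hr'def
    have hr'0 : 0 ≤ r' := mul_nonneg hr (Real.exp_pos _).le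
    have hr'δ : r' ≤ δ₀ := by
      have := hcond 1 (by simp)
      simp only [List.drop_succ_cons, List.drop_zero, Nat.cast_one, one_mul] at this
      rw [hSw] at this
      convert this using 3
      ring
    -- one step
    have hstep : |wordComp t z - y₀| ≤ r' := by
      apply one_step g hgd hgpos ε₁ δ₀ (hmod g hgG) y₀ r' hr'0 hr'δ
      have : r' * Real.exp (Real.log (deriv g y₀) - ε₁) = r := by
        rw [hr'def, mul_assoc, ← Real.exp_add]
        simp
      rw [this]
      simpa [wordComp_cons] using hz
    -- apply IH
    have hcond' : ∀ i : ℕ, i ≤ t.length → r' * Real.exp (-(Real.log (deriv (wordComp t) x)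
        - Real.log (deriv (wordComp (t.drop i)) x) - i * ε₁)) ≤ δ₀ := by
      intro i hi
      have := hcond (i + 1) (by simpa using Nat.succ_le_succ hi)
      simp only [List.drop_succ_cons] at this
      rw [hSw] at this
      convert this using 1
      rw [hr'def, mul_assoc, ← Real.exp_add]
      congr 1
      push_cast
      ring
    obtain ⟨hzx, hder⟩ := ih htw r' hr'0 hcond' z hstep
    constructor
    · calc |z - x| ≤ r' * Real.exp (-(Real.log (deriv (wordComp t) x) - t.length * ε₁)) := hzx
        _ = r * Real.exp (-(Real.log (deriv (wordComp (g :: t)) x)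
            - (g :: t).length * ε₁)) := by
          rw [hr'def, mul_assoc, ← Real.exp_add, hSw]
          congr 2
          simp only [List.length_cons]
          push_cast
          ring
    · have hyclose : Real.exp (Real.log (deriv g y₀) - ε₁) ≤ deriv g (wordComp t z) := by
        have hd : |wordComp t z - y₀| ≤ δ₀ := le_trans hstep hr'δ
        have := hmod g hgG (wordComp t z) y₀ hd
        rw [abs_le] at this
        calc Real.exp (Real.log (deriv g y₀) - ε₁)
            ≤ Real.exp (Real.log (deriv g (wordComp t z))) := Real.exp_le_exp.2 (by linarith [this.1])
          _ = deriv g (wordComp t z) := Real.exp_log (hgpos _)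
      rw [hderiv_eq z]
      calc Real.exp (Real.log (deriv (wordComp (g :: t)) x) - (g :: t).length * ε₁)
          = Real.exp (Real.log (deriv g y₀) - ε₁)
            * Real.exp (Real.log (deriv (wordComp t) x) - t.length * ε₁) := by
            rw [← Real.exp_add, hSw]
            congr 1
            simp only [List.length_cons]
            push_cast
            ring
        _ ≤ deriv g (wordComp t z) * deriv (wordComp t) z :=
            mul_le_mul hyclose hder (Real.exp_pos _).le (le_of_lt (hgpos _))

lemma maxExp_set_finite (G : Finset (ℝ → ℝ)) (m : ℕ) (x : ℝ) :
    {d : ℝ | ∃ w : List (ℝ → ℝ), IsWord G w ∧ w.length ≤ m ∧ d = deriv (wordComp w) x}.Finite := by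
  have h1 : {l : List {g // g ∈ G} | l.length ≤ m}.Finite := List.finite_length_le _ m
  have h2 := (h1.image (fun l => List.map Subtype.val l)).image (fun w => deriv (wordComp w) x)
  apply Set.Finite.subset h2
  rintro d ⟨w, hw, hlen, rfl⟩
  refine ⟨w, ⟨w.attach.map (fun p => (⟨p.1, hw p.1 p.2⟩ : {g // g ∈ G})), by simpa using hlen, ?_⟩, rfl⟩
  simp [List.map_map, Function.comp]

lemma maxExp_set_nonempty (G : Finset (ℝ → ℝ)) (m : ℕ) (x : ℝ) :
    {d : ℝ | ∃ w : List (ℝ → ℝ), IsWord G w ∧ w.length ≤ m ∧ d = deriv (wordComp w) x}.Nonempty :=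
  ⟨deriv (wordComp []) x, [], fun g h => absurd h List.not_mem_nil, by simp, rfl⟩

set_option maxHeartbeats 1000000 in
/-- If `λ_*(x) > a`, then for each `n ≥ 1` there is a word `h` uniformly expanding by at
least `e^{na/2}` on the preimage `I` of the interval `J` of radius `δ₀/2` about `h(x)`,
and `I` has length less than `δ₀ e^{-na/2}`. -/
theorem uniform_expansion_words_at_expansive_point
    (G : Finset (ℝ → ℝ))
    (hC1 : ∀ g ∈ G, ContDiff ℝ 1 g)
    (hpos : ∀ g ∈ G, ∀ y : ℝ, 0 < deriv g y)
    (hinv : ∀ g ∈ G, ∃ h ∈ G, (∀ x : ℝ, h (g x) = x) ∧ (∀ x : ℝ, g (h x) = x))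
    (a ε₁ δ₀ : ℝ) (ha : 0 < a) (hε₁ : 0 < ε₁) (hε₁a : ε₁ < a / 100)
    (hδ₀ : 0 < δ₀) (hmod : LogModulus G ε₁ δ₀)
    (x : ℝ) (hx : ENNReal.ofReal a < expExponent G x) :
    ∀ n : ℕ, 1 ≤ n →
      ∃ h : List (ℝ → ℝ), IsWord G h ∧
        x ∈ wordComp h ⁻¹' Set.Icc (wordComp h x - δ₀ / 2) (wordComp h x + δ₀ / 2) ∧
        (∀ z ∈ wordComp h ⁻¹' Set.Icc (wordComp h x - δ₀ / 2) (wordComp h x + δ₀ / 2),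
          Real.exp ((n : ℝ) * a / 2) < deriv (wordComp h) z) ∧
        volume (wordComp h ⁻¹' Set.Icc (wordComp h x - δ₀ / 2) (wordComp h x + δ₀ / 2))
          < ENNReal.ofReal (δ₀ * Real.exp (-((n : ℝ) * a) / 2)) := by
  intro n hn
  -- Step 1: frequently large expansion
  have hfreq : ∃ᶠ m in Filter.atTop,
      ENNReal.ofReal a < ENNReal.ofReal (Real.log (maxExp G m x) / m) := by
    by_contra hcon
    rw [Filter.not_frequently] at hcon
    have hle : expExponent G x ≤ ENNReal.ofReal a := by
      apply Filter.limsup_le_of_le (by isBoundedDefault)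
      filter_upwards [hcon] with m hm
      exact not_lt.1 hm
    exact absurd hx (not_lt.2 hle)
  obtain ⟨m, hmge, hma⟩ := Filter.frequently_atTop.mp hfreq (max 1 (2 * n))
  have hm1 : 1 ≤ m := le_trans (le_max_left _ _) hmge
  have hm2n : 2 * n ≤ m := le_trans (le_max_right _ _) hmge
  have hmR : (0 : ℝ) < m := by exact_mod_cast hm1
  have hlogm : a < Real.log (maxExp G m x) / m := by
    by_contra hcon
    push_neg at hcon
    exact absurd hma (not_lt.2 (ENNReal.ofReal_le_ofReal hcon))
  have hDk0 : (m : ℝ) * a < Real.log (maxExp G m x) := by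
    have := (lt_div_iff₀ hmR).mp hlogm
    linarith
  -- Step 2: extract a word realizing the max
  obtain ⟨w, hw, hwlen, hweq⟩ :=
    Set.Nonempty.csSup_mem (maxExp_set_nonempty G m x) (maxExp_set_finite G m x)
  rw [← maxExp] at hweq
  set k := w.length with hk
  have hDkw : (m : ℝ) * a < Real.log (deriv (wordComp w) x) := by rw [← hweq]; exact hDk0
  -- Step 3: stopping time
  set b := a / 2 + ε₁ with hb
  set D : ℕ → ℝ := fun i => Real.log (deriv (wordComp (w.drop (k - i))) x) with hD
  obtain ⟨j, hjmem, hjmax⟩ := Finset.exists_max_image (Finset.range (k + 1))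
    (fun i => D i - i * b) ⟨0, by simp⟩
  have hjk : j ≤ k := Nat.lt_succ_iff.mp (Finset.mem_range.mp hjmem)
  set h := w.drop (k - j) with hhd
  have hhw : IsWord G h := fun g hg => hw g (List.mem_of_mem_drop hg)
  have hlenh : h.length = j := by
    rw [hhd, List.length_drop]
    omega
  have hDj : D j = Real.log (deriv (wordComp h) x) := rfl
  have hDkk : D k = Real.log (deriv (wordComp w) x) := by
    simp only [hD, Nat.sub_self, List.drop_zero]
  -- key fact A : cumulative expansion
  have hA : ∀ i : ℕ, i ≤ j → (i : ℝ) * b ≤ D j - D (j - i) := by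
    intro i hi
    have hmem : j - i ∈ Finset.range (k + 1) := Finset.mem_range.mpr (by omega)
    have := hjmax (j - i) hmem
    have hcast : ((j - i : ℕ) : ℝ) = (j : ℝ) - i := by
      push_cast [Nat.cast_sub hi]
      ring
    rw [hcast] at this
    nlinarith [this]
  -- key fact B
  have hB : D k - k * b ≤ D j - j * b := by
    have := hjmax k (Finset.mem_range.mpr (by omega))
    simpa using this
  -- main inequality
  have hmain : (n : ℝ) * a / 2 < D j - j * ε₁ := by
    have hkm : (k : ℝ) ≤ m := by exact_mod_cast hwlen
    have h2n : 2 * (n : ℝ) ≤ m := by exact_mod_cast hm2n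
    have hn1 : (1 : ℝ) ≤ n := by exact_mod_cast hn
    have hj0 : (0 : ℝ) ≤ j := Nat.cast_nonneg j
    rw [hDkk] at hB
    rw [hb] at hB
    have p1 : 0 ≤ (j : ℝ) * a := mul_nonneg hj0 ha.le
    have p2 : 0 ≤ ((m : ℝ) - k) * (a / 2 + ε₁) :=
      mul_nonneg (by linarith) (by linarith)
    have p3 : 0 ≤ ((m : ℝ) - 2 * n) * (a / 2 - ε₁) :=
      mul_nonneg (by linarith) (by linarith)
    have p4 : 0 ≤ ((n : ℝ) - 1) * (a / 2 - 2 * ε₁) :=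
      mul_nonneg (by linarith) (by linarith)
    have hbexp : b = a / 2 + ε₁ := hb
    have hb0 : (0:ℝ) ≤ b := by rw [hbexp]; linarith
    nlinarith [hB, hDkw, p1, p2, p3, p4]
  -- apply the key contraction lemma
  have hkey := key_contraction G hC1 hpos ε₁ δ₀ hδ₀ hmod x h hhw (δ₀ / 2) (by linarith)
  have hcond : ∀ i : ℕ, i ≤ h.length → δ₀ / 2 * Real.exp (-(Real.log (deriv (wordComp h) x)
      - Real.log (deriv (wordComp (h.drop i)) x) - i * ε₁)) ≤ δ₀ := by
    intro i hi
    rw [hlenh] at hi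
    have hdrop : h.drop i = w.drop (k - (j - i)) := by
      rw [hhd, List.drop_drop]
      congr 1
      omega
    have hAi := hA i hi
    have hiε : (i : ℝ) * ε₁ ≤ (i : ℝ) * b := by
      apply mul_le_mul_of_nonneg_left _ (Nat.cast_nonneg i)
      rw [hb]; linarith
    have hexp : Real.exp (-(Real.log (deriv (wordComp h) x)
        - Real.log (deriv (wordComp (h.drop i)) x) - i * ε₁)) ≤ 1 := by
      rw [Real.exp_le_one_iff, hdrop]
      have : Real.log (deriv (wordComp (w.drop (k - (j - i)))) x) = D (j - i) := rfl
      rw [this, ← hDj]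
      linarith
    nlinarith [hexp, hδ₀]
  have hkey2 := hkey hcond
  refine ⟨h, hhw, ?_, ?_, ?_⟩
  · simp only [Set.mem_preimage, Set.mem_Icc]
    constructor <;> linarith
  · intro z hz
    simp only [Set.mem_preimage, Set.mem_Icc] at hz
    have habs : |wordComp h z - wordComp h x| ≤ δ₀ / 2 := by
      rw [abs_le]; constructor <;> linarith [hz.1, hz.2]
    have := (hkey2 z habs).2
    calc Real.exp ((n : ℝ) * a / 2)
        < Real.exp (Real.log (deriv (wordComp h) x) - h.length * ε₁) := by
          apply Real.exp_lt_exp.2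
          rw [hlenh, ← hDj]
          linarith
      _ ≤ deriv (wordComp h) z := this
  · set ρ := δ₀ / 2 * Real.exp (-(Real.log (deriv (wordComp h) x) - h.length * ε₁)) with hρ
    have hsub : wordComp h ⁻¹' Set.Icc (wordComp h x - δ₀ / 2) (wordComp h x + δ₀ / 2)
        ⊆ Set.Icc (x - ρ) (x + ρ) := by
      intro z hz
      simp only [Set.mem_preimage, Set.mem_Icc] at hz ⊢
      have habs : |wordComp h z - wordComp h x| ≤ δ₀ / 2 := by
        rw [abs_le]; constructor <;> linarith [hz.1, hz.2]
      have := (hkey2 z habs).1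
      rw [abs_le] at this
      constructor <;> linarith [this.1, this.2]
    calc volume (wordComp h ⁻¹' Set.Icc (wordComp h x - δ₀ / 2) (wordComp h x + δ₀ / 2))
        ≤ volume (Set.Icc (x - ρ) (x + ρ)) := measure_mono hsub
      _ = ENNReal.ofReal (2 * ρ) := by rw [Real.volume_Icc]; congr 1; ring
      _ < ENNReal.ofReal (δ₀ * Real.exp (-((n : ℝ) * a) / 2)) := by
        rw [ENNReal.ofReal_lt_ofReal_iff (by positivity)]
        have h2ρ : 2 * ρ = δ₀ * Real.exp (-(Real.log (deriv (wordComp h) x)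
            - h.length * ε₁)) := by rw [hρ]; ring
        rw [h2ρ]
        apply mul_lt_mul_of_pos_left _ hδ₀
        apply Real.exp_lt_exp.2
        rw [hlenh, ← hDj]
        linarith
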